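/- Let n ≥ 3 and ω > 0 be fixed, and for r > 0 set R(r) = (r^n + ω/ω_n)^{1/n}, so that the shell A_{r,R(r)} has volume ω. Then σ₁(A_{r,R(r)}) = (n−2) / ( R(r) ( (R(r)/r)^{n−2} − 1 ) ) tends to +∞ as r → +∞; more precisely, σ₁(A_{r,R(r)}) is asymptotic to (n ω_n / ω) r^{n−1} as r → +∞. -/

import Mathlib

open Filter

noncomputable section

/-- Euclidean space `ℝ^n`. -/
abbrev Euc (n : ℕ) := EuclideanSpace ℝ (Fin n)

/-- `ω_n`, the volume of the unit ball in `ℝ^n`. -/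
def unitBallVol (n : ℕ) : ℝ :=
  (MeasureTheory.volume (Metric.ball (0 : Euc n) 1)).toReal

/-- The outer radius making the shell `A_{r,R(r)}` have volume `ω`: `R(r) = (rⁿ + ω/ω_n)^{1/n}`. -/
def outerRadius (n : ℕ) (ω r : ℝ) : ℝ := (r ^ n + ω / unitBallVol n) ^ (1 / (n : ℝ))

/-- The rescaled ratio function: the ratio `σ₁/((nω_n/ω) r^{n-1})` equals `auxG` at `u = c/rⁿ`. -/
private lemma auxG_tendsto (n : ℕ) (hn : 3 ≤ n) :
    Tendsto (fun u : ℝ => (((n:ℝ)-2) * u) /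
        ((n:ℝ) * (1+u)^(1/(n:ℝ)) * ((1+u)^(((n:ℝ)-2)/(n:ℝ)) - 1)))
      (nhdsWithin 0 (Set.Ioi 0)) (nhds 1) := by
  have hn3 : (3:ℝ) ≤ (n:ℝ) := by exact_mod_cast hn
  have hnr : (0:ℝ) < n := by linarith
  set β : ℝ := ((n:ℝ)-2)/(n:ℝ) with hβdef
  have hβ : 0 < β := div_pos (by linarith) hnr
  have h1 : HasDerivAt (fun x : ℝ => 1 + x) 1 0 := (hasDerivAt_id 0).const_add 1
  have h2 : HasDerivAt (fun y : ℝ => y ^ β) (β * (1:ℝ) ^ (β - 1)) (1 + 0) := by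
    simpa using Real.hasDerivAt_rpow_const (x := (1:ℝ)) (p := β) (Or.inl one_ne_zero)
  have hd : HasDerivAt (fun x : ℝ => (1+x)^β) β 0 := by
    have := h2.comp 0 h1
    simpa [Function.comp_def] using this
  rw [hasDerivAt_iff_tendsto_slope] at hd
  have hslope : Tendsto (fun u : ℝ => ((1+u)^β - 1)/u) (nhdsWithin 0 (Set.Ioi 0)) (nhds β) := by
    refine (hd.mono_left (nhdsWithin_mono 0 (fun x hx => ne_of_gt hx))).congr (fun u => ?_)
    simp [slope_def_field]
  have hinv : Tendsto (fun u : ℝ => u/((1+u)^β - 1)) (nhdsWithin 0 (Set.Ioi 0)) (nhds β⁻¹) := by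
    simpa [inv_div] using hslope.inv₀ hβ.ne'
  have hA : Tendsto (fun u : ℝ => ((1+u)^(1/(n:ℝ)))⁻¹) (nhdsWithin 0 (Set.Ioi 0)) (nhds 1) := by
    have hc : ContinuousAt (fun u : ℝ => (1+u)^(1/(n:ℝ))) 0 :=
      (Real.continuousAt_rpow_const _ _ (Or.inl (by norm_num))).comp
        ((continuous_const.add continuous_id).continuousAt)
    have : Tendsto (fun u : ℝ => (1+u)^(1/(n:ℝ))) (nhdsWithin 0 (Set.Ioi 0)) (nhds 1) := by
      have := hc.tendsto.mono_left (nhdsWithin_le_nhds (s := Set.Ioi (0:ℝ)))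
      simpa using this
    simpa using this.inv₀ (by norm_num)
  have := ((tendsto_const_nhds (x := ((n:ℝ)-2)/(n:ℝ))
      (f := nhdsWithin (0:ℝ) (Set.Ioi 0))).mul hA).mul hinv
  have hne : (n:ℝ) - 2 ≠ 0 := by linarith
  have h1' : ((n:ℝ)-2)/(n:ℝ) * 1 * β⁻¹ = 1 := by
    rw [hβdef, mul_one, inv_div, div_mul_div_comm]
    rw [div_eq_one_iff_eq (by positivity)]
    ring
  rw [h1'] at this
  refine this.congr (fun u => ?_)
  generalize (1 + u : ℝ) ^ (1/(n:ℝ)) = a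
  generalize ((1 + u : ℝ) ^ β - 1) = b
  ring

/-- The purely algebraic identity behind the rescaling. -/
private lemma aux_algebra (n : ℕ) (hn : 3 ≤ n) (x r a b c : ℝ) (hr : r ≠ 0) (hc : c ≠ 0)
    (ha : a ≠ 0) (hb : b ≠ 0) :
    (x / ((r * a) * b)) / (((n:ℝ)/c) * r ^ (n-1)) = (x * (c / r^n)) / ((n:ℝ) * a * b) := by
  have hn' : ((n:ℝ)) ≠ 0 := by positivity
  have hpow : r ^ n = r ^ (n-1) * r := by rw [← pow_succ]; congr 1; omega
  rw [hpow]
  field_simp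

set_option maxHeartbeats 1000000 in
/-- Let `n ≥ 3` and `ω > 0`; for `r > 0` set `R(r) = (rⁿ + ω/ω_n)^{1/n}`.
Then `σ₁(A_{r,R(r)}) = (n-2)/(R(r)((R(r)/r)^{n-2} - 1))` tends to `+∞` as `r → +∞`;
more precisely it is asymptotic to `(n ω_n/ω) r^{n-1}`, i.e. the ratio tends to `1`. -/
theorem shell_eigenvalue_volume_constraint_tendsto_atTop (n : ℕ) (hn : 3 ≤ n)
    (ω : ℝ) (hω : 0 < ω) :
    Tendsto (fun r : ℝ =>
        ((n : ℝ) - 2) / (outerRadius n ω r * ((outerRadius n ω r / r) ^ (n - 2) - 1)))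
      atTop atTop ∧
    Tendsto (fun r : ℝ =>
        (((n : ℝ) - 2) / (outerRadius n ω r * ((outerRadius n ω r / r) ^ (n - 2) - 1))) /
          (((n : ℝ) * unitBallVol n / ω) * r ^ (n - 1)))
      atTop (nhds 1) := by
  have hvol : 0 < unitBallVol n :=
    ENNReal.toReal_pos (Metric.measure_ball_pos _ _ one_pos).ne'
      MeasureTheory.measure_ball_lt_top.ne
  have hn3 : (3:ℝ) ≤ (n:ℝ) := by exact_mod_cast hn
  have hnr : (0:ℝ) < n := by linarith
  set c : ℝ := ω / unitBallVol n with hcdef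
  have hc : 0 < c := div_pos hω hvol
  set β : ℝ := ((n:ℝ)-2)/(n:ℝ) with hβdef
  have hβ : 0 < β := div_pos (by linarith) hnr
  have hNc : ((n:ℝ) * unitBallVol n / ω) = (n:ℝ)/c := by
    rw [hcdef, div_div_eq_mul_div]
  -- the inner variable u = c / rⁿ tends to 0 from the right
  have hu : Tendsto (fun r : ℝ => c / r ^ n) atTop (nhdsWithin 0 (Set.Ioi 0)) := by
    rw [tendsto_nhdsWithin_iff]
    constructor
    · simpa [div_eq_mul_inv] using
        ((tendsto_pow_atTop (by omega : n ≠ 0)).inv_tendsto_atTop).const_mul c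
    · filter_upwards [eventually_gt_atTop (0:ℝ)] with r hr
      exact Set.mem_Ioi.2 (by positivity)
  -- eventual identification of the ratio with auxG (c / rⁿ)
  have heq : ∀ᶠ r : ℝ in atTop,
      ((((n : ℝ) - 2) / (outerRadius n ω r * ((outerRadius n ω r / r) ^ (n - 2) - 1))) /
          (((n : ℝ) * unitBallVol n / ω) * r ^ (n - 1))) =
      (((n:ℝ)-2) * (c / r ^ n)) /
        ((n:ℝ) * (1 + c / r ^ n)^(1/(n:ℝ)) * ((1 + c / r ^ n)^β - 1)) := by
    filter_upwards [eventually_gt_atTop (0:ℝ)] with r hr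
    have hrn : (0:ℝ) < r ^ n := by positivity
    have hu' : 0 < c / r ^ n := by positivity
    have key : outerRadius n ω r = r * (1 + c / r ^ n) ^ (1/(n:ℝ)) := by
      rw [outerRadius, ← hcdef]
      have h1 : r ^ n + c = r ^ n * (1 + c / r ^ n) := by field_simp
      rw [h1, Real.mul_rpow hrn.le (by positivity), ← Real.rpow_natCast r n,
        ← Real.rpow_mul hr.le, mul_one_div_cancel (by positivity : ((n:ℝ)) ≠ 0), Real.rpow_one]
    have hdiv : outerRadius n ω r / r = (1 + c / r ^ n) ^ (1/(n:ℝ)) := by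
      rw [key, mul_div_cancel_left₀ _ hr.ne']
    have hpow : ((1 + c / r ^ n) ^ (1/(n:ℝ))) ^ (n - 2) = (1 + c / r ^ n) ^ β := by
      rw [← Real.rpow_natCast ((1 + c / r ^ n) ^ (1/(n:ℝ))) (n-2),
        ← Real.rpow_mul (by positivity)]
      congr 1
      rw [Nat.cast_sub (by omega), hβdef]
      push_cast
      ring
    rw [hdiv, key, hpow, hNc]
    have ha : (1 + c / r ^ n) ^ (1/(n:ℝ)) ≠ 0 := by positivity
    have hb : (1 + c / r ^ n) ^ β - 1 ≠ 0 := by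
      have : (1:ℝ) < (1 + c / r ^ n) ^ β :=
        (Real.one_lt_rpow_iff_of_pos (by positivity)).2 (Or.inl ⟨by linarith, hβ⟩)
      linarith
    exact aux_algebra n hn _ r _ _ c hr.ne' hc.ne' ha hb
  have h2 : Tendsto (fun r : ℝ =>
      (((n : ℝ) - 2) / (outerRadius n ω r * ((outerRadius n ω r / r) ^ (n - 2) - 1))) /
        (((n : ℝ) * unitBallVol n / ω) * r ^ (n - 1))) atTop (nhds 1) :=
    ((auxG_tendsto n hn).comp hu).congr' (heq.mono fun r h => h.symm)
  refine ⟨?_, h2⟩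
  have hfac : Tendsto (fun r : ℝ => ((n:ℝ) * unitBallVol n / ω) * r ^ (n-1)) atTop atTop :=
    Tendsto.const_mul_atTop (by positivity) (tendsto_pow_atTop (by omega : n - 1 ≠ 0))
  refine (Filter.Tendsto.pos_mul_atTop one_pos h2 hfac).congr' ?_
  filter_upwards [eventually_gt_atTop (0:ℝ)] with r hr
  exact div_mul_cancel₀ _ (by positivity : ((n:ℝ) * unitBallVol n / ω) * r ^ (n-1) ≠ 0)

end
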